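/- Let w ∈ S_n have full support. If for every left descent s of w the support of sw is not all of S, and for every right descent s of w the support of ws is not all of S, then w is a Coxeter element of S_n. -/

import Mathlib

namespace Stmt10

variable {m : ℕ}

/-- The action of a permutation of `Fin (m+1)` on `ℕ` (identity out of range). -/
def pnat (v : Equiv.Perm (Fin (m + 1))) : ℕ → ℕ := fun i =>
  if h : i < m + 1 then (v ⟨i, h⟩ : ℕ) else i

lemma pnat_lt (v : Equiv.Perm (Fin (m + 1))) {i : ℕ} (h : i < m + 1) : pnat v i < m + 1 := by
  simp only [pnat, dif_pos h]; exact (v ⟨i, h⟩).isLt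

lemma pnat_of_ge (v : Equiv.Perm (Fin (m + 1))) {i : ℕ} (h : ¬ i < m + 1) : pnat v i = i := by
  simp only [pnat, dif_neg h]

lemma pnat_coe (v : Equiv.Perm (Fin (m + 1))) (x : Fin (m + 1)) : pnat v (x : ℕ) = (v x : ℕ) := by
  simp only [pnat, dif_pos x.isLt, Fin.eta]

lemma pnat_mul (u v : Equiv.Perm (Fin (m + 1))) (i : ℕ) :
    pnat (u * v) i = pnat u (pnat v i) := by
  by_cases h : i < m + 1
  · simp only [pnat, dif_pos h, dif_pos (v ⟨i, h⟩).isLt, Fin.eta, Equiv.Perm.mul_apply]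
  · simp only [pnat, dif_neg h]

lemma pnat_one (i : ℕ) : pnat (1 : Equiv.Perm (Fin (m + 1))) i = i := by
  by_cases h : i < m + 1
  · simp [pnat, dif_pos h]
  · simp [pnat, dif_neg h]

lemma pnat_symm_pnat (v : Equiv.Perm (Fin (m + 1))) (i : ℕ) :
    pnat v.symm (pnat v i) = i := by
  by_cases h : i < m + 1
  · simp only [pnat, dif_pos h, dif_pos (v ⟨i, h⟩).isLt, Fin.eta, Equiv.symm_apply_apply]
  · simp only [pnat, dif_neg h]

lemma pnat_pnat_symm (v : Equiv.Perm (Fin (m + 1))) (i : ℕ) :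
    pnat v (pnat v.symm i) = i := by
  have := pnat_symm_pnat v.symm i
  simpa using this

lemma pnat_inj (v : Equiv.Perm (Fin (m + 1))) {a b : ℕ} (h : pnat v a = pnat v b) : a = b := by
  have := congrArg (pnat v.symm) h
  rwa [pnat_symm_pnat, pnat_symm_pnat] at this

lemma pnat_inv (v : Equiv.Perm (Fin (m + 1))) (i : ℕ) : pnat v⁻¹ i = pnat v.symm i := rfl

lemma eq_one_of_pnat (v : Equiv.Perm (Fin (m + 1))) (h : ∀ i, pnat v i = i) : v = 1 := by
  ext x
  have := h (x : ℕ)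
  rw [pnat_coe] at this
  exact_mod_cast this

/-- the simple reflection `swap i (i+1)` -/
def sw (i : Fin m) : Equiv.Perm (Fin (m + 1)) := Equiv.swap i.castSucc i.succ

lemma pnat_sw (i : Fin m) (x : ℕ) :
    pnat (sw i) x = if x = (i : ℕ) then (i : ℕ) + 1 else if x = (i : ℕ) + 1 then (i : ℕ) else x := by
  by_cases h : x < m + 1
  · simp only [pnat, dif_pos h, sw]
    by_cases hx1 : x = (i : ℕ)
    · have : (⟨x, h⟩ : Fin (m+1)) = i.castSucc := by
        apply Fin.ext; simpa using hx1
      rw [this, Equiv.swap_apply_left, if_pos hx1]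
      rfl
    · by_cases hx2 : x = (i : ℕ) + 1
      · have : (⟨x, h⟩ : Fin (m+1)) = i.succ := by
          apply Fin.ext; simpa using hx2
        rw [this, Equiv.swap_apply_right, if_neg hx1, if_pos hx2]
        rfl
      · have h1 : (⟨x, h⟩ : Fin (m+1)) ≠ i.castSucc := by
          intro hh; apply hx1; have := congrArg (fun z : Fin (m+1) => (z : ℕ)) hh; simpa using this
        have h2 : (⟨x, h⟩ : Fin (m+1)) ≠ i.succ := by
          intro hh; apply hx2; have := congrArg (fun z : Fin (m+1) => (z : ℕ)) hh; simpa using this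
        rw [Equiv.swap_apply_of_ne_of_ne h1 h2, if_neg hx1, if_neg hx2]
  · have h1 : ¬ x = (i : ℕ) := by have := i.isLt; omega
    have h2 : ¬ x = (i : ℕ) + 1 := by have := i.isLt; omega
    rw [pnat_of_ge _ h, if_neg h1, if_neg h2]

lemma sw_mul_self (i : Fin m) : sw i * sw i = 1 := by
  simp [sw, Equiv.swap_mul_self]

/-- if `v` has no descent then `v = 1` -/
lemma eq_one_of_no_descent (v : Equiv.Perm (Fin (m + 1)))
    (h : ∀ k, k < m → pnat v k < pnat v (k + 1)) : v = 1 := by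
  have chain : ∀ x, x ≤ m → x ≤ pnat v x := by
    intro x
    induction x with
    | zero => omega
    | succ t ih =>
      intro hx
      have h1 := h t (by omega)
      have h2 := ih (by omega)
      omega
  have eqs : ∀ d x, x ≤ m → m - x ≤ d → pnat v x = x := by
    intro d
    induction d with
    | zero =>
      intro x hx hd
      have hx' : x = m := by omega
      have := pnat_lt v (show x < m + 1 by omega)
      have := chain x (by omega)
      omega
    | succ d ih =>
      intro x hx hd
      rcases eq_or_lt_of_le hx with heq | hlt
      · subst heq
        have := pnat_lt v (show x < x + 1 by omega)
        have := chain x (by omega)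
        omega
      · have h1 := chain x (by omega)
        rcases eq_or_lt_of_le h1 with heq | hgt
        · omega
        · exfalso
          set z := pnat v x with hz
          have hzm : z ≤ m := by have := pnat_lt v (show x < m + 1 by omega); omega
          have : pnat v z = z := ih z hzm (by omega)
          have := pnat_inj v (show pnat v z = pnat v x by omega)
          omega
  apply eq_one_of_pnat
  intro i
  by_cases hi : i < m + 1
  · exact eqs m i (by omega) (by omega)
  · exact pnat_of_ge v hi

def pairsSet (m : ℕ) : Finset (ℕ × ℕ) := (Finset.range (m + 1)) ×ˢ (Finset.range (m + 1))

def invCount (v : Equiv.Perm (Fin (m + 1))) : ℕ :=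
  ((pairsSet m).filter fun p => p.1 < p.2 ∧ pnat v p.2 < pnat v p.1).card

lemma invCount_split (v : Equiv.Perm (Fin (m + 1))) {k : ℕ} (hk : k < m) :
    invCount v = ((pairsSet m).filter fun p =>
        (p.1 < p.2 ∧ pnat v p.2 < pnat v p.1) ∧ p ≠ (k, k + 1)).card
      + (if pnat v (k + 1) < pnat v k then 1 else 0) := by
  classical
  have hsplit : (pairsSet m).filter (fun p => p.1 < p.2 ∧ pnat v p.2 < pnat v p.1)
      = ((pairsSet m).filter fun p => (p.1 < p.2 ∧ pnat v p.2 < pnat v p.1) ∧ p ≠ (k, k + 1))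
        ∪ ((pairsSet m).filter fun p => (p.1 < p.2 ∧ pnat v p.2 < pnat v p.1) ∧ p = (k, k + 1)) := by
    rw [← Finset.filter_or]
    apply Finset.filter_congr
    intro p _
    constructor
    · intro hp; by_cases hpa : p = (k, k+1) <;> tauto
    · tauto
  have hdisj : Disjoint ((pairsSet m).filter fun p => (p.1 < p.2 ∧ pnat v p.2 < pnat v p.1) ∧ p ≠ (k, k + 1))
      ((pairsSet m).filter fun p => (p.1 < p.2 ∧ pnat v p.2 < pnat v p.1) ∧ p = (k, k + 1)) := by
    rw [Finset.disjoint_filter]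
    tauto
  have hmem : (k, k + 1) ∈ pairsSet m := by
    simp [pairsSet, Finset.mem_product]
    omega
  have hlast : ((pairsSet m).filter fun p => (p.1 < p.2 ∧ pnat v p.2 < pnat v p.1) ∧ p = (k, k + 1))
      = if pnat v (k + 1) < pnat v k then {(k, k + 1)} else ∅ := by
    split_ifs with hd
    · ext p
      simp only [Finset.mem_filter, Finset.mem_singleton]
      constructor
      · tauto
      · intro hp; subst hp; exact ⟨hmem, ⟨⟨by omega, hd⟩, rfl⟩⟩
    · ext p
      simp only [Finset.mem_filter, Finset.notMem_empty, iff_false]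
      rintro ⟨_, ⟨_, h2⟩, rfl⟩
      exact hd h2
  rw [invCount, hsplit, Finset.card_union_of_disjoint hdisj, hlast]
  congr 1
  split_ifs <;> simp

lemma invCount_mul_sw (v : Equiv.Perm (Fin (m + 1))) {k : ℕ} (hk : k < m) :
    invCount (v * sw ⟨k, hk⟩) = ((pairsSet m).filter fun p =>
        (p.1 < p.2 ∧ pnat v p.2 < pnat v p.1) ∧ p ≠ (k, k + 1)).card
      + (if pnat v k < pnat v (k + 1) then 1 else 0) := by
  classical
  have hps : ∀ x : ℕ, pnat (v * sw ⟨k, hk⟩) x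
      = pnat v (if x = k then k + 1 else if x = k + 1 then k else x) := by
    intro x
    rw [pnat_mul, pnat_sw]
  rw [invCount_split (v * sw ⟨k, hk⟩) hk]
  congr 1
  · apply Finset.card_bij' (i := fun p _ => ((if p.1 = k then k + 1 else if p.1 = k + 1 then k else p.1 : ℕ),
      (if p.2 = k then k + 1 else if p.2 = k + 1 then k else p.2 : ℕ)))
      (j := fun p _ => ((if p.1 = k then k + 1 else if p.1 = k + 1 then k else p.1 : ℕ),
      (if p.2 = k then k + 1 else if p.2 = k + 1 then k else p.2 : ℕ)))
    · intro p hp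
      simp only [Finset.mem_filter, pairsSet, Finset.mem_product, Finset.mem_range] at hp ⊢
      obtain ⟨⟨hp1, hp2⟩, ⟨hlt, hinv⟩, hne⟩ := hp
      have hne' : ¬ (p.1 = k ∧ p.2 = k + 1) := by
        intro ⟨a, b⟩; exact hne (Prod.ext a b)
      rw [hps, hps] at hinv
      refine ⟨⟨by split_ifs <;> omega, by split_ifs <;> omega⟩, ⟨by split_ifs <;> omega, hinv⟩, ?_⟩
      intro hcon
      have h1 := congrArg Prod.fst hcon
      have h2 := congrArg Prod.snd hcon
      simp only at h1 h2
      split_ifs at h1 h2 <;> omega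
    · intro p hp
      simp only [Finset.mem_filter, pairsSet, Finset.mem_product, Finset.mem_range] at hp ⊢
      obtain ⟨⟨hp1, hp2⟩, ⟨hlt, hinv⟩, hne⟩ := hp
      have hne' : ¬ (p.1 = k ∧ p.2 = k + 1) := by
        intro ⟨a, b⟩; exact hne (Prod.ext a b)
      refine ⟨⟨by split_ifs <;> omega, by split_ifs <;> omega⟩, ⟨by split_ifs <;> omega, ?_⟩, ?_⟩
      · rw [hps, hps]
        have e1 : (if (if p.1 = k then k + 1 else if p.1 = k + 1 then k else p.1) = k then k + 1
            else if (if p.1 = k then k + 1 else if p.1 = k + 1 then k else p.1) = k + 1 then k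
            else (if p.1 = k then k + 1 else if p.1 = k + 1 then k else p.1)) = p.1 := by
          split_ifs <;> omega
        have e2 : (if (if p.2 = k then k + 1 else if p.2 = k + 1 then k else p.2) = k then k + 1
            else if (if p.2 = k then k + 1 else if p.2 = k + 1 then k else p.2) = k + 1 then k
            else (if p.2 = k then k + 1 else if p.2 = k + 1 then k else p.2)) = p.2 := by
          split_ifs <;> omega
        simp only [e1, e2]
        exact hinv
      · intro hcon
        have h1 := congrArg Prod.fst hcon
        have h2 := congrArg Prod.snd hcon
        simp only at h1 h2
        split_ifs at h1 h2 <;> omega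
    · intro p hp
      have : ∀ x : ℕ, (if (if x = k then k + 1 else if x = k + 1 then k else x) = k then k + 1
          else if (if x = k then k + 1 else if x = k + 1 then k else x) = k + 1 then k
          else (if x = k then k + 1 else if x = k + 1 then k else x)) = x := by
        intro x; split_ifs <;> omega
      exact Prod.ext (this p.1) (this p.2)
    · intro p hp
      have : ∀ x : ℕ, (if (if x = k then k + 1 else if x = k + 1 then k else x) = k then k + 1
          else if (if x = k then k + 1 else if x = k + 1 then k else x) = k + 1 then k
          else (if x = k then k + 1 else if x = k + 1 then k else x)) = x := by
        intro x; split_ifs <;> omega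
      exact Prod.ext (this p.1) (this p.2)
  · have e1 : pnat (v * sw ⟨k, hk⟩) (k + 1) = pnat v k := by
      rw [hps]; congr 1; simp
    have e2 : pnat (v * sw ⟨k, hk⟩) k = pnat v (k + 1) := by
      rw [hps]; congr 1; simp
    rw [e1, e2]

lemma invCount_asc (v : Equiv.Perm (Fin (m + 1))) {k : ℕ} (hk : k < m)
    (h : pnat v k < pnat v (k + 1)) :
    invCount (v * sw ⟨k, hk⟩) = invCount v + 1 := by
  rw [invCount_mul_sw v hk, invCount_split v hk, if_pos h, if_neg (by omega)]

lemma invCount_desc (v : Equiv.Perm (Fin (m + 1))) {k : ℕ} (hk : k < m)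
    (h : pnat v (k + 1) < pnat v k) :
    invCount (v * sw ⟨k, hk⟩) + 1 = invCount v := by
  rw [invCount_mul_sw v hk, invCount_split v hk, if_pos h, if_neg (by omega)]

lemma invCount_symm (v : Equiv.Perm (Fin (m + 1))) : invCount v.symm = invCount v := by
  classical
  apply Finset.card_bij' (i := fun p _ => ((pnat v.symm p.2 : ℕ), (pnat v.symm p.1 : ℕ)))
    (j := fun p _ => ((pnat v p.2 : ℕ), (pnat v p.1 : ℕ)))
  · intro p hp
    simp only [Finset.mem_filter, pairsSet, Finset.mem_product, Finset.mem_range] at hp ⊢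
    obtain ⟨⟨hp1, hp2⟩, hlt, hinv⟩ := hp
    refine ⟨⟨pnat_lt _ hp2, pnat_lt _ hp1⟩, hinv, ?_⟩
    rw [pnat_pnat_symm, pnat_pnat_symm]
    exact hlt
  · intro p hp
    simp only [Finset.mem_filter, pairsSet, Finset.mem_product, Finset.mem_range] at hp ⊢
    obtain ⟨⟨hp1, hp2⟩, hlt, hinv⟩ := hp
    refine ⟨⟨pnat_lt _ hp2, pnat_lt _ hp1⟩, hinv, ?_⟩
    rw [pnat_symm_pnat, pnat_symm_pnat]
    exact hlt
  · intro p hp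
    exact Prod.ext (by simp [pnat_pnat_symm]) (by simp [pnat_pnat_symm])
  · intro p hp
    exact Prod.ext (by simp [pnat_symm_pnat]) (by simp [pnat_symm_pnat])

/-- `v` preserves the initial segment `{0..j}` -/
def Pres (v : Equiv.Perm (Fin (m + 1))) (j : ℕ) : Prop := ∀ x : ℕ, x ≤ j ↔ pnat v x ≤ j

lemma Pres.one (j : ℕ) : Pres (1 : Equiv.Perm (Fin (m + 1))) j := by
  intro x; rw [pnat_one]

lemma Pres.mul {u v : Equiv.Perm (Fin (m + 1))} {j : ℕ} (hu : Pres u j) (hv : Pres v j) :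
    Pres (u * v) j := by
  intro x
  rw [pnat_mul]
  exact (hv x).trans (hu (pnat v x))

lemma Pres.symm {v : Equiv.Perm (Fin (m + 1))} {j : ℕ} (h : Pres v j) : Pres v.symm j := by
  intro x
  have := h (pnat v.symm x)
  rw [pnat_pnat_symm] at this
  exact this.symm

lemma Pres.sw {j : ℕ} {c : Fin m} (h : (c : ℕ) ≠ j) : Pres (sw c) j := by
  intro x
  rw [pnat_sw]
  split_ifs <;> omega

section Part3

variable {m : ℕ} (cs : CoxeterSystem (CoxeterMatrix.Aₙ m) (Equiv.Perm (Fin (m + 1))))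
  (hs : ∀ i : Fin m, cs.simple i = Equiv.swap i.castSucc i.succ)

include hs

lemma simple_eq (i : Fin m) : cs.simple i = sw i := hs i

lemma inv_wordProd_le (ω : List (Fin m)) : invCount (cs.wordProd ω) ≤ ω.length := by
  induction ω using List.reverseRecOn with
  | nil =>
    have : cs.wordProd [] = 1 := cs.wordProd_nil
    rw [this]
    have h0 : invCount (1 : Equiv.Perm (Fin (m + 1))) = 0 := by
      rw [invCount, Finset.card_eq_zero, Finset.filter_eq_empty_iff]
      intro p _
      rw [pnat_one, pnat_one]
      omega
    omega
  | append_singleton ω c ih =>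
    have hw : cs.wordProd (ω ++ [c]) = cs.wordProd ω * sw c := by
      rw [← List.concat_eq_append, cs.wordProd_concat, simple_eq cs hs]
    rw [hw]
    set u := cs.wordProd ω with hu
    have hc : (c : ℕ) < m := c.isLt
    have hceta : (⟨(c : ℕ), hc⟩ : Fin m) = c := by apply Fin.ext; rfl
    rcases lt_trichotomy (pnat u (c : ℕ)) (pnat u ((c : ℕ) + 1)) with h | h | h
    · have := invCount_asc u hc h
      rw [hceta] at this
      rw [this]
      simp only [List.length_append, List.length_singleton]
      omega
    · exact absurd (pnat_inj u h) (by omega)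
    · have := invCount_desc u hc h
      rw [hceta] at this
      simp only [List.length_append, List.length_singleton]
      omega

lemma invCount_le_length (v : Equiv.Perm (Fin (m + 1))) : invCount v ≤ cs.length v := by
  obtain ⟨ω, hlen, hv⟩ := cs.exists_reduced_word v
  calc invCount v = invCount (cs.wordProd ω) := by rw [← hv]
  _ ≤ ω.length := inv_wordProd_le cs hs ω
  _ = cs.length v := by rw [hv]; exact hlen.symm

lemma length_le_invCount (v : Equiv.Perm (Fin (m + 1))) : cs.length v ≤ invCount v := by
  generalize hN : invCount v = N
  induction N using Nat.strong_induction_on generalizing v with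
  | _ N ih =>
    by_cases hv : v = 1
    · subst hv
      simp
    · have hdesc : ∃ k, k < m ∧ pnat v (k + 1) < pnat v k := by
        by_contra hcon
        push_neg at hcon
        apply hv
        apply eq_one_of_no_descent
        intro k hk
        have h1 := hcon k hk
        have h2 : pnat v k ≠ pnat v (k + 1) := fun h => by have := pnat_inj v h; omega
        omega
      obtain ⟨k, hk, hkd⟩ := hdesc
      have hdec := invCount_desc v hk hkd
      set u := v * sw ⟨k, hk⟩ with hu
      have hvu : v = u * sw ⟨k, hk⟩ := by
        rw [hu, mul_assoc, sw_mul_self, mul_one]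
      have hlen : cs.length v ≤ cs.length u + 1 := by
        calc cs.length v = cs.length (u * sw ⟨k, hk⟩) := by rw [← hvu]
        _ = cs.length (u * cs.simple ⟨k, hk⟩) := by rw [simple_eq cs hs]
        _ ≤ cs.length u + cs.length (cs.simple ⟨k, hk⟩) := cs.length_mul_le _ _
        _ = cs.length u + 1 := by rw [cs.length_simple]
      have hiu : cs.length u ≤ invCount u := ih (invCount u) (by omega) u rfl
      omega

lemma length_eq_invCount (v : Equiv.Perm (Fin (m + 1))) : cs.length v = invCount v :=
  le_antisymm (length_le_invCount cs hs v) (invCount_le_length cs hs v)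

lemma isRightDescent_iff (v : Equiv.Perm (Fin (m + 1))) {k : ℕ} (hk : k < m) :
    cs.IsRightDescent v ⟨k, hk⟩ ↔ pnat v (k + 1) < pnat v k := by
  unfold CoxeterSystem.IsRightDescent
  rw [simple_eq cs hs, length_eq_invCount cs hs, length_eq_invCount cs hs]
  rcases lt_trichotomy (pnat v (k : ℕ)) (pnat v ((k : ℕ) + 1)) with h | h | h
  · have := invCount_asc v hk h
    constructor
    · intro hcon; omega
    · intro hcon; omega
  · exact absurd (pnat_inj v h) (by omega)
  · have := invCount_desc v hk h
    constructor
    · intro _; exact h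
    · intro _; omega

lemma isLeftDescent_iff (v : Equiv.Perm (Fin (m + 1))) {k : ℕ} (hk : k < m) :
    cs.IsLeftDescent v ⟨k, hk⟩ ↔ pnat v.symm (k + 1) < pnat v.symm k := by
  have h1 : cs.IsLeftDescent v ⟨k, hk⟩ ↔ cs.IsRightDescent v⁻¹ ⟨k, hk⟩ :=
    (cs.isRightDescent_inv_iff).symm
  rw [h1, isRightDescent_iff cs hs v⁻¹ hk]
  rfl

lemma pres_of_avoid (ω : List (Fin m)) {j : ℕ} (h : ∀ i ∈ ω, (i : ℕ) ≠ j) :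
    Pres (cs.wordProd ω) j := by
  induction ω with
  | nil => rw [cs.wordProd_nil]; exact Pres.one j
  | cons c ω ih =>
    rw [cs.wordProd_cons, simple_eq cs hs]
    exact Pres.mul (Pres.sw (h c List.mem_cons_self)) (ih (fun i hi => h i (List.mem_cons_of_mem c hi)))

/-- key (hard) direction : a reduced word for a permutation preserving `{0..j}` avoids `j`. -/
lemma avoid_of_reduced_of_pres {j : ℕ} (hj : j < m) :
    ∀ ω : List (Fin m), cs.IsReduced ω → Pres (cs.wordProd ω) j → ∀ i ∈ ω, (i : ℕ) ≠ j := by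
  intro ω
  induction ω using List.reverseRecOn with
  | nil => intro _ _ i hi; simp at hi
  | append_singleton ω c ih =>
    intro hred hpres i hi
    have hw : cs.wordProd (ω ++ [c]) = cs.wordProd ω * sw c := by
      rw [← List.concat_eq_append, cs.wordProd_concat, simple_eq cs hs]
    have hred' : cs.IsReduced ω := by
      have := hred.take ω.length
      rwa [List.take_left] at this
    set v := cs.wordProd (ω ++ [c]) with hv
    set u := cs.wordProd ω with huu
    have huv : u = v * sw c := by
      rw [hw, mul_assoc, sw_mul_self, mul_one]
    by_cases hcj : (c : ℕ) = j
    · exfalso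
      -- v preserves {0..j} and right multiplication by s_j must increase length,
      -- but u = v * s_j is shorter.
      have h1 : pnat v j ≤ j := (hpres j).mp (le_refl j)
      have h2 : ¬ pnat v (j + 1) ≤ j := fun h => by have := (hpres (j + 1)).mpr h; omega
      have hasc : pnat v j < pnat v (j + 1) := by omega
      have := invCount_asc v hj hasc
      have hceta : (⟨j, hj⟩ : Fin m) = c := by apply Fin.ext; simp [hcj]
      rw [hceta, ← huv] at this
      -- lengths : ℓ u = |ω|, ℓ v = |ω| + 1
      have hlu : cs.length u = ω.length := hred'
      have hlv : cs.length v = ω.length + 1 := by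
        have := hred
        unfold CoxeterSystem.IsReduced at this
        rw [← hv] at this
        rw [this, List.length_append, List.length_singleton]
      rw [length_eq_invCount cs hs] at hlu hlv
      omega
    · have hpresu : Pres u j := by
        rw [huv]
        exact Pres.mul hpres (Pres.sw hcj)
      rcases List.mem_append.mp hi with h | h
      · exact ih hred' hpresu i h
      · have : i = c := by simpa using h
        rw [this]
        exact hcj

end Part3

section Part4

variable {m : ℕ} (cs : CoxeterSystem (CoxeterMatrix.Aₙ m) (Equiv.Perm (Fin (m + 1))))
  (hs : ∀ i : Fin m, cs.simple i = Equiv.swap i.castSucc i.succ)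

/-- the word `[a+len, a+len-1, ..., a]` -/
def dList (a : ℕ) : (len : ℕ) → a + len < m → List (Fin m)
  | 0, h => [⟨a, by omega⟩]
  | (len + 1), h => ⟨a + len + 1, by omega⟩ :: dList a len (by omega)

lemma dList_mem {a : ℕ} : ∀ {len : ℕ} (h : a + len < m) {i : Fin m},
    i ∈ dList a len h → a ≤ (i : ℕ) ∧ (i : ℕ) ≤ a + len := by
  intro len
  induction len with
  | zero =>
    intro h i hi
    rw [dList] at hi
    simp at hi
    subst hi
    simp
  | succ len ih =>
    intro h i hi
    rw [dList] at hi
    rcases List.mem_cons.mp hi with h1 | h1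
    · subst h1; simp; omega
    · have := ih (by omega) h1
      omega

lemma dList_cover {a : ℕ} : ∀ {len : ℕ} (h : a + len < m) {x : ℕ} (hx : x < m),
    a ≤ x → x ≤ a + len → (⟨x, hx⟩ : Fin m) ∈ dList a len h := by
  intro len
  induction len with
  | zero =>
    intro h x hx h1 h2
    rw [dList]
    simp
    omega
  | succ len ih =>
    intro h x hx h1 h2
    rw [dList]
    rcases Nat.lt_or_ge x (a + len + 1) with hc | hc
    · exact List.mem_cons_of_mem _ (ih (by omega) hx h1 (by omega))
    · apply List.mem_cons.mpr
      left
      apply Fin.ext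
      show x = a + len + 1
      omega

lemma dList_nodup {a : ℕ} : ∀ {len : ℕ} (h : a + len < m), (dList a len h).Nodup := by
  intro len
  induction len with
  | zero => intro h; rw [dList]; simp
  | succ len ih =>
    intro h
    rw [dList]
    refine List.nodup_cons.mpr ⟨?_, ih (by omega)⟩
    intro hmem
    have h2 : a + len + 1 ≤ a + len := by simpa using (dList_mem (by omega) hmem).2
    omega

include hs

lemma dList_pnat {a : ℕ} : ∀ {len : ℕ} (h : a + len < m) (x : ℕ),
    pnat (cs.wordProd (dList a len h)) x
      = if x = a then a + len + 1 else if a + 1 ≤ x ∧ x ≤ a + len + 1 then x - 1 else x := by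
  intro len
  induction len with
  | zero =>
    intro h x
    rw [dList, cs.wordProd_singleton, simple_eq cs hs, pnat_sw]
    simp only
    split_ifs <;> omega
  | succ len ih =>
    intro h x
    rw [dList, cs.wordProd_cons, simple_eq cs hs, pnat_mul, ih (by omega), pnat_sw]
    simp only
    split_ifs <;> omega

end Part4

section Part5

variable {m : ℕ} (cs : CoxeterSystem (CoxeterMatrix.Aₙ m) (Equiv.Perm (Fin (m + 1))))
  (hs : ∀ i : Fin m, cs.simple i = Equiv.swap i.castSucc i.succ)

include hs

lemma aux : ∀ t k : ℕ, ∀ v : Equiv.Perm (Fin (m + 1)),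
    m ≤ k + t →
    (∀ x, x < k → pnat v x = x) →
    (∀ j, k ≤ j → j < m → ¬ Pres v j) →
    (∀ i, i < m → pnat v.symm (i + 1) < pnat v.symm i →
        ∀ x, (pnat v.symm x ≤ i ↔ (x < i ∨ x = i + 1))) →
    (∀ i, i < m → pnat v (i + 1) < pnat v i →
        ∀ x, (pnat v x ≤ i ↔ (x < i ∨ x = i + 1))) →
    ∃ ω : List (Fin m), ω.Nodup ∧ (∀ i : Fin m, k ≤ (i : ℕ) → i ∈ ω) ∧
      (∀ i ∈ ω, k ≤ (i : ℕ)) ∧ v = cs.wordProd ω := by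
  intro t
  induction t using Nat.strong_induction_on with
  | _ t IH =>
  intro k v hkt hfix hF hHL hHR
  classical
  by_cases hkm : m ≤ k
  · -- base case : v = 1
    have hv1 : v = 1 := by
      apply eq_one_of_pnat
      intro i
      by_cases him : i < m + 1
      · rcases Nat.lt_or_ge i m with h | h
        · exact hfix i (by omega)
        · have hz := pnat_lt v him
          by_contra hne
          have hzm : pnat v i < m := by omega
          have h2 : pnat v (pnat v i) = pnat v i := hfix _ (by omega)
          have h3 := pnat_inj v h2
          omega
      · exact pnat_of_ge v him
    refine ⟨[], by simp, ?_, by simp, by rw [hv1, cs.wordProd_nil]⟩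
    intro i hi
    exfalso
    have := i.isLt
    omega
  · push_neg at hkm
    -- v moves k upward
    have hvalk : ∀ x, pnat v x < k → x < k := by
      intro x hx
      have h2 : pnat v (pnat v x) = pnat v x := hfix _ hx
      have := pnat_inj v h2
      omega
    have hvk : k < pnat v k := by
      rcases Nat.lt_or_ge k (pnat v k) with h | h
      · exact h
      · exfalso
        have hvkk : pnat v k = k := by
          by_contra hne
          have := hvalk k (by omega)
          omega
        apply hF k (le_refl k) hkm
        intro x
        constructor
        · intro hx
          rcases Nat.lt_or_ge x k with h1 | h1
          · rw [hfix x h1]; omega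
          · have hxx : x = k := by omega
            rw [hxx, hvkk]
        · intro hx
          by_contra hxk
          push_neg at hxk
          rcases Nat.lt_or_ge (pnat v x) k with h1 | h1
          · have := hvalk x h1
            omega
          · have hxx : pnat v x = k := by omega
            have h2 : pnat v x = pnat v k := by rw [hxx, hvkk]
            have := pnat_inj v h2
            omega
    have hposk : ∀ x, pnat v.symm x < k → x < k := by
      intro x hx
      have h2 := hfix (pnat v.symm x) hx
      rw [pnat_pnat_symm] at h2
      omega
    -- existence of a left descent
    have hdesc : ∃ i, k ≤ i ∧ i < m ∧ pnat v.symm (i + 1) < pnat v.symm i := by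
      by_contra hcon
      push_neg at hcon
      have hinc : ∀ i, k ≤ i → i < m → pnat v.symm i < pnat v.symm (i + 1) := by
        intro i h1 h2
        have h3 := hcon i h1 h2
        have h4 : pnat v.symm i ≠ pnat v.symm (i + 1) := fun h => by
          have := pnat_inj v.symm h; omega
        omega
      have hchain : ∀ x, k ≤ x → x ≤ m → x ≤ pnat v.symm x := by
        intro x
        induction x with
        | zero => intro _ _; omega
        | succ n ihn =>
          intro h1 h2
          rcases Nat.lt_or_ge n k with hc | hc
          · have : k = n + 1 := by omega
            have h3 : ¬ pnat v.symm (n + 1) < k := fun hh => by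
              have := hposk (n + 1) hh; omega
            omega
          · have := ihn hc (by omega)
            have := hinc n hc (by omega)
            omega
      have hz := pnat_lt v (show k < m + 1 by omega)
      have h5 : pnat v.symm (pnat v k) = k := pnat_symm_pnat v k
      have := hchain (pnat v k) (by omega) (by omega)
      omega
    set i₁ := Nat.find hdesc with hi₁def
    have hP : k ≤ i₁ ∧ i₁ < m ∧ pnat v.symm (i₁ + 1) < pnat v.symm i₁ := Nat.find_spec hdesc
    obtain ⟨hk1, hi1m, hdesc1⟩ := hP
    have hincbelow : ∀ x, k ≤ x → x < i₁ → pnat v.symm x < pnat v.symm (x + 1) := by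
      intro x h1 h2
      have h3 : ¬ (k ≤ x ∧ x < m ∧ pnat v.symm (x + 1) < pnat v.symm x) :=
        Nat.find_min hdesc (hi₁def ▸ h2)
      have h4 : pnat v.symm x ≠ pnat v.symm (x + 1) := fun h => by
        have := pnat_inj v.symm h; omega
      have h5 : ¬ pnat v.symm (x + 1) < pnat v.symm x := fun hc => h3 ⟨h1, by omega, hc⟩
      omega
    have hchain2 : ∀ b, k ≤ b → b ≤ i₁ → ∀ a, k ≤ a → a ≤ b →
        pnat v.symm a + (b - a) ≤ pnat v.symm b := by
      intro b
      induction b with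
      | zero =>
        intro h1 h2 a h3 h4
        have : a = 0 := by omega
        subst this
        omega
      | succ n ihn =>
        intro h1 h2 a h3 h4
        rcases Nat.lt_or_ge n a with hc | hc
        · have : a = n + 1 := by omega
          subst this
          omega
        · have := ihn (by omega) (by omega) a h3 hc
          have := hincbelow n (by omega) (by omega)
          omega
    have hL1 : ∀ x, pnat v.symm x ≤ i₁ ↔ (x < i₁ ∨ x = i₁ + 1) := hHL i₁ hi1m hdesc1
    have hpos_i1 : i₁ < pnat v.symm i₁ := by
      by_contra hc
      push_neg at hc
      rcases (hL1 i₁).mp hc with h | h <;> omega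
    have hposk1 : k + 1 ≤ pnat v.symm k := by
      have h1 : ¬ pnat v.symm k < k := fun h => by have := hposk k h; omega
      have h2 : pnat v.symm k ≠ k := by
        intro h
        have h3 := pnat_pnat_symm v k
        rw [h] at h3
        omega
      omega
    have hposmid : ∀ x, k ≤ x → x < i₁ → pnat v.symm x = x + 1 := by
      intro x h1 h2
      have hlow := hchain2 x h1 (by omega) k (le_refl k) h1
      have hc := hchain2 (i₁ - 1) (by omega) (by omega) x h1 (by omega)
      have hle : pnat v.symm (i₁ - 1) ≤ i₁ := (hL1 (i₁ - 1)).mpr (Or.inl (by omega))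
      omega
    have hposi11 : pnat v.symm (i₁ + 1) = k := by
      have hub : pnat v.symm (i₁ + 1) ≤ i₁ := (hL1 (i₁ + 1)).mpr (Or.inr rfl)
      have hlb : ¬ pnat v.symm (i₁ + 1) < k := fun h => by have := hposk _ h; omega
      by_contra hne
      have h1 : k ≤ pnat v.symm (i₁ + 1) - 1 := by omega
      have h2 : pnat v.symm (i₁ + 1) - 1 < i₁ := by omega
      have h3 := hposmid _ h1 h2
      have heq : pnat v.symm (pnat v.symm (i₁ + 1) - 1) = pnat v.symm (i₁ + 1) := by omega
      have := pnat_inj v.symm heq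
      omega
    have hvk2 : pnat v k = i₁ + 1 := by
      have h1 := pnat_pnat_symm v (i₁ + 1)
      rw [hposi11] at h1
      exact h1
    have hvmid : ∀ p, k + 1 ≤ p → p ≤ i₁ → pnat v p = p - 1 := by
      intro p h1 h2
      have h3 := hposmid (p - 1) (by omega) (by omega)
      have h4 := pnat_pnat_symm v (p - 1)
      rw [h3] at h4
      have : p - 1 + 1 = p := by omega
      rw [this] at h4
      exact h4
    -- the descending run and the quotient permutation
    have hi1m' : k + (i₁ - k) < m := by omega
    have hkk : k + (i₁ - k) = i₁ := by omega
    set D := dList k (i₁ - k) hi1m' with hD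
    set d := cs.wordProd D with hd
    have hdp : ∀ x, pnat d x
        = if x = k then i₁ + 1 else if k + 1 ≤ x ∧ x ≤ i₁ + 1 then x - 1 else x := by
      intro x
      have h1 := dList_pnat cs hs hi1m' x
      rw [hkk] at h1
      rw [hd, hD]
      exact h1
    set v' := d⁻¹ * v with hv'
    have hvdv : v = d * v' := by
      rw [hv', ← mul_assoc]
      simp
    have hv'p : ∀ x, pnat v' x = pnat d⁻¹ (pnat v x) := by
      intro x
      rw [hv', pnat_mul]
    have hdinv : ∀ y, pnat d⁻¹ y
        = if y = i₁ + 1 then k else if k ≤ y ∧ y ≤ i₁ then y + 1 else y := by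
      intro y
      apply pnat_inj d
      have h1 : pnat d (pnat d⁻¹ y) = y := by
        rw [← pnat_mul]
        simp [pnat_one]
      rw [h1, hdp]
      split_ifs <;> omega
    have hfix' : ∀ x, x < i₁ + 1 → pnat v' x = x := by
      intro x hx
      rw [hv'p]
      rcases Nat.lt_or_ge x k with h1 | h1
      · rw [hfix x h1, hdinv]
        split_ifs <;> omega
      · rcases Nat.eq_or_lt_of_le h1 with h2 | h2
        · rw [← h2, hvk2, hdinv]
          split_ifs <;> omega
        · rw [hvmid x (by omega) (by omega), hdinv]
          split_ifs <;> omega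
    have hfix'symm : ∀ x, x < i₁ + 1 → pnat v'.symm x = x := by
      intro x hx
      apply pnat_inj v'
      rw [pnat_pnat_symm, hfix' x hx]
    have hbig' : ∀ x, i₁ + 1 ≤ x → i₁ + 1 ≤ pnat v' x := by
      intro x hx
      by_contra hc
      push_neg at hc
      have h1 := hfix' (pnat v' x) (by omega)
      have := pnat_inj v' h1
      omega
    have hbig'symm : ∀ x, i₁ + 1 ≤ x → i₁ + 1 ≤ pnat v'.symm x := by
      intro x hx
      by_contra hc
      push_neg at hc
      have h1 := hfix'symm (pnat v'.symm x) (by omega)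
      have h2 : pnat v'.symm (pnat v'.symm x) = pnat v'.symm x := h1
      have := pnat_inj v'.symm h2
      omega
    have hvrange : ∀ x, i₁ + 1 ≤ x → pnat v x = i₁ ∨ i₁ + 2 ≤ pnat v x := by
      intro x hx
      by_contra hc
      push_neg at hc
      obtain ⟨hne, hlt⟩ := hc
      have hzx : pnat v.symm (pnat v x) = x := pnat_symm_pnat v x
      rcases Nat.lt_or_ge (pnat v x) k with h1 | h1
      · have := hvalk x h1
        omega
      · rcases Nat.lt_or_ge (pnat v x) i₁ with h2 | h2
        · have := hposmid (pnat v x) h1 h2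
          omega
        · -- pnat v x = i₁ + 1 (since ≠ i₁, < i₁+2, ≥ i₁)
          have h3 : pnat v x = i₁ + 1 := by omega
          rw [h3, hposi11] at hzx
          omega
    have hpos' : ∀ x, pnat v'.symm x = pnat v.symm (pnat d x) := by
      intro x
      apply pnat_inj v'
      rw [pnat_pnat_symm, hv'p, pnat_pnat_symm]
      rw [← pnat_mul]
      simp [pnat_one]
    -- L' inheritance
    have hHL' : ∀ i, i < m → pnat v'.symm (i + 1) < pnat v'.symm i →
        ∀ x, (pnat v'.symm x ≤ i ↔ (x < i ∨ x = i + 1)) := by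
      intro i him hdesc'
      have hi_ge : i₁ + 1 ≤ i := by
        by_contra hc
        push_neg at hc
        have h1 : pnat v'.symm i = i := hfix'symm i (by omega)
        rcases Nat.lt_or_ge (i + 1) (i₁ + 1) with h2 | h2
        · have := hfix'symm (i + 1) h2
          omega
        · have := hbig'symm (i + 1) h2
          omega
      rcases Nat.lt_or_ge (i₁ + 1) i with hgt | hle
      · -- i ≥ i₁ + 2 : descent transfers directly
        have hdi : pnat d i = i := by rw [hdp]; split_ifs <;> omega
        have hdi1 : pnat d (i + 1) = i + 1 := by rw [hdp]; split_ifs <;> omega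
        have e1 : pnat v'.symm i = pnat v.symm i := by rw [hpos' i, hdi]
        have e2 : pnat v'.symm (i + 1) = pnat v.symm (i + 1) := by rw [hpos' (i + 1), hdi1]
        have hdescv : pnat v.symm (i + 1) < pnat v.symm i := by omega
        have hLv := hHL i him hdescv
        intro x
        rw [hpos' x]
        rw [hLv (pnat d x)]
        rw [hdp]
        split_ifs <;> omega
      · have hieq : i = i₁ + 1 := by omega
        subst hieq
        have hd1 : pnat d (i₁ + 1) = i₁ := by rw [hdp]; split_ifs <;> omega
        have hd2 : pnat d (i₁ + 2) = i₁ + 2 := by rw [hdp]; split_ifs <;> omega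
        have hkey0 : pnat v.symm (i₁ + 2) < pnat v.symm i₁ := by
          have e1 := hpos' (i₁ + 1)
          have e2 := hpos' (i₁ + 1 + 1)
          rw [hd1] at e1
          have hd2' : pnat d (i₁ + 1 + 1) = i₁ + 2 := by rw [hdp]; split_ifs <;> omega
          rw [hd2'] at e2
          omega
        have hq2lb : i₁ + 1 ≤ pnat v.symm (i₁ + 2) := by
          by_contra hc
          push_neg at hc
          rcases (hL1 (i₁ + 2)).mp (by omega) with h | h <;> omega
        -- KEY CLAIM
        have hkey : pnat v.symm (i₁ + 2) = i₁ + 1 := by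
          by_contra hne
          have hq2 : i₁ + 2 ≤ pnat v.symm (i₁ + 2) := by omega
          have hq3 : i₁ + 3 ≤ pnat v.symm i₁ := by omega
          have hqm : pnat v.symm i₁ ≤ m := by
            have := pnat_lt v.symm (show i₁ < m + 1 by omega)
            omega
          have hvq : pnat v (pnat v.symm i₁) = i₁ := pnat_pnat_symm v i₁
          have hposy : pnat v.symm (pnat v (i₁ + 1)) = i₁ + 1 := pnat_symm_pnat v (i₁ + 1)
          have hy : i₁ + 3 ≤ pnat v (i₁ + 1) := by
            have h1 : ¬ (pnat v (i₁ + 1) < i₁ ∨ pnat v (i₁ + 1) = i₁ + 1) := by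
              intro hcc
              have := (hL1 (pnat v (i₁ + 1))).mpr hcc
              omega
            push_neg at h1
            by_contra hcy
            push_neg at hcy
            have h2 : pnat v (i₁ + 1) = i₁ ∨ pnat v (i₁ + 1) = i₁ + 2 := by omega
            rcases h2 with h | h
            · rw [h] at hposy; omega
            · rw [h] at hposy; omega
          have hrdesc : ∃ p, i₁ + 1 ≤ p ∧ p < m ∧ pnat v (p + 1) < pnat v p := by
            by_contra hcon
            push_neg at hcon
            have hinc2 : ∀ p, i₁ + 1 ≤ p → p < m → pnat v p < pnat v (p + 1) := by
              intro p h1 h2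
              have h3 := hcon p h1 h2
              have h4 : pnat v p ≠ pnat v (p + 1) := fun h => by
                have := pnat_inj v h; omega
              omega
            have hchain3 : ∀ b, i₁ + 1 ≤ b → b ≤ m → pnat v (i₁ + 1) ≤ pnat v b := by
              intro b
              induction b with
              | zero => intro h1 _; omega
              | succ nn ihn =>
                intro h1 h2
                rcases Nat.lt_or_ge nn (i₁ + 1) with hc2 | hc2
                · have h3 : nn + 1 = i₁ + 1 := by omega
                  rw [h3]
                · have := ihn (by omega) (by omega)
                  have := hinc2 nn hc2 (by omega)
                  omega
            have h5 := hchain3 (pnat v.symm i₁) (by omega) hqm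
            rw [hvq] at h5
            omega
          set p := Nat.find hrdesc with hpdef
          have hPp : i₁ + 1 ≤ p ∧ p < m ∧ pnat v (p + 1) < pnat v p := Nat.find_spec hrdesc
          obtain ⟨hp1, hp2, hp3⟩ := hPp
          have hpmin : ∀ x, i₁ + 1 ≤ x → x < p → pnat v x < pnat v (x + 1) := by
            intro x h1 h2
            have h3 : ¬ (i₁ + 1 ≤ x ∧ x < m ∧ pnat v (x + 1) < pnat v x) :=
              Nat.find_min hrdesc (hpdef ▸ h2)
            have h4 : pnat v x ≠ pnat v (x + 1) := fun h => by
              have := pnat_inj v h; omega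
            have h5 : ¬ pnat v (x + 1) < pnat v x := fun hc => h3 ⟨h1, by omega, hc⟩
            omega
          have hRp := hHR p hp2 hp3
          have hqp : pnat v.symm i₁ = p + 1 := by
            have h1 : pnat v (pnat v.symm i₁) ≤ p := by rw [hvq]; omega
            rcases (hRp (pnat v.symm i₁)).mp h1 with h | h
            · exfalso
              have h2 : pnat v (pnat v.symm i₁ - 1) < pnat v (pnat v.symm i₁) := by
                have h5 := hpmin (pnat v.symm i₁ - 1) (by omega) (by omega)
                have e : pnat v.symm i₁ - 1 + 1 = pnat v.symm i₁ := by omega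
                rw [e] at h5
                exact h5
              rw [hvq] at h2
              have h3 := (hL1 (pnat v (pnat v.symm i₁ - 1))).mpr (Or.inl h2)
              rw [pnat_symm_pnat] at h3
              omega
            · exact h
          rcases Nat.eq_or_lt_of_le hp1 with hpe | hpe
          · omega
          · have hchain4 : ∀ b, i₁ + 1 ≤ b → b ≤ p - 1 →
                pnat v (i₁ + 1) + (b - (i₁ + 1)) ≤ pnat v b := by
              intro b
              induction b with
              | zero => intro h1 _; omega
              | succ nn ihn =>
                intro h1 h2
                rcases Nat.lt_or_ge nn (i₁ + 1) with hc2 | hc2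
                · have h3 : nn + 1 = i₁ + 1 := by omega
                  rw [h3]
                  omega
                · have := ihn (by omega) (by omega)
                  have := hpmin nn hc2 (by omega)
                  omega
            have h6 := hchain4 (p - 1) (by omega) (le_refl _)
            have h7 : pnat v (p - 1) ≤ p := (hRp (p - 1)).mpr (Or.inl (by omega))
            omega
        -- conclusion at i = i₁ + 1
        intro x
        rcases Nat.lt_or_ge x (i₁ + 1) with hx | hx
        · rw [hfix'symm x hx]
          omega
        · rcases Nat.eq_or_lt_of_le hx with hx1 | hx1
          · rw [← hx1, hpos' (i₁ + 1), hd1]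
            have := hkey0
            omega
          · rcases Nat.eq_or_lt_of_le (show i₁ + 2 ≤ x by omega) with hx2 | hx2
            · rw [← hx2, hpos' (i₁ + 2), hd2, hkey]
              omega
            · -- x ≥ i₁ + 3
              have hdx : pnat d x = x := by rw [hdp]; split_ifs <;> omega
              rw [hpos' x, hdx]
              have h1 : ¬ pnat v.symm x ≤ i₁ := by
                intro hc
                rcases (hL1 x).mp hc with h | h <;> omega
              have h2 : pnat v.symm x ≠ i₁ + 1 := by
                intro hc
                have h3 : pnat v.symm x = pnat v.symm (i₁ + 2) := by omega
                have := pnat_inj v.symm h3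
                omega
              omega
    -- R' inheritance
    have hv'x : ∀ x, i₁ + 1 ≤ x → pnat v' x = if pnat v x = i₁ then i₁ + 1 else pnat v x := by
      intro x hx
      rw [hv'p, hdinv]
      rcases hvrange x hx with h | h
      · split_ifs <;> omega
      · split_ifs <;> omega
    have hHR' : ∀ p, p < m → pnat v' (p + 1) < pnat v' p →
        ∀ x, (pnat v' x ≤ p ↔ (x < p ∨ x = p + 1)) := by
      intro p hpm hdesc'
      have hp_ge : i₁ + 1 ≤ p := by
        by_contra hc
        push_neg at hc
        have h1 : pnat v' p = p := hfix' p (by omega)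
        rcases Nat.lt_or_ge (p + 1) (i₁ + 1) with h2 | h2
        · have := hfix' (p + 1) h2
          omega
        · have := hbig' (p + 1) h2
          omega
      have hdescv : pnat v (p + 1) < pnat v p := by
        have e1 := hv'x p (by omega)
        have e2 := hv'x (p + 1) (by omega)
        have hne : pnat v p ≠ pnat v (p + 1) := fun h => by
          have := pnat_inj v h; omega
        rcases hvrange p (by omega) with h | h <;>
          rcases hvrange (p + 1) (by omega) with h' | h' <;>
            split_ifs at e1 e2 <;> omega
      have hRv := hHR p hpm hdescv
      intro x
      rcases Nat.lt_or_ge x (i₁ + 1) with hx | hx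
      · rw [hfix' x hx]
        omega
      · have e := hv'x x hx
        have hr := hRv x
        rcases hvrange x hx with h | h
        · rw [e, if_pos h]
          rw [h] at hr
          have h2 := hr.mp (by omega)
          omega
        · rw [e, if_neg (by omega)]
          exact hr
    -- F inheritance
    have hF' : ∀ j, i₁ + 1 ≤ j → j < m → ¬ Pres v' j := by
      intro j h1 h2 hp
      apply hF j (by omega) h2
      have hpd : Pres d j := by
        rw [hd]
        apply pres_of_avoid cs hs
        intro i hi
        have := dList_mem hi1m' (hD ▸ hi)
        omega
      rw [hvdv]
      exact Pres.mul hpd hp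
    -- recurse
    obtain ⟨ω', hnd', hcov', hge', hprod'⟩ :=
      IH (t - (i₁ + 1 - k)) (by omega) (i₁ + 1) v' (by omega) hfix' hF' hHL' hHR'
    refine ⟨D ++ ω', ?_, ?_, ?_, ?_⟩
    · rw [List.nodup_append]
      refine ⟨dList_nodup hi1m', hnd', ?_⟩
      intro a ha b ha' hab
      subst hab
      have h1 := dList_mem hi1m' (hD ▸ ha)
      have h2 := hge' a ha'
      omega
    · intro i hi
      rcases Nat.lt_or_ge (i : ℕ) (i₁ + 1) with h | h
      · apply List.mem_append.mpr
        left
        have h3 : (⟨(i : ℕ), i.isLt⟩ : Fin m) ∈ dList k (i₁ - k) hi1m' :=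
          dList_cover hi1m' i.isLt hi (by omega)
        rw [hD]
        simpa using h3
      · exact List.mem_append.mpr (Or.inr (hcov' i h))
    · intro i hi
      rcases List.mem_append.mp hi with h | h
      · have := dList_mem hi1m' (hD ▸ h)
        omega
      · have := hge' i h
        omega
    · rw [cs.wordProd_append, ← hd, ← hprod']
      exact hvdv

end Part5

end Stmt10

/-- The support of `w`: the set of simple reflection indices appearing in some
(equivalently, any) reduced word for `w`. -/
def CoxeterSystem.supp {B W : Type*} [Group W] {M : CoxeterMatrix B}
    (cs : CoxeterSystem M W) (w : W) : Set B :=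
  { i | ∃ ω : List B, cs.IsReduced ω ∧ cs.wordProd ω = w ∧ i ∈ ω }

/-- Let `w ∈ S_n` have full support.  If for every left descent `s` of `w` either
`Supp(sw) ≠ S`, and for every right descent `s` of `w`
`Supp(ws) ≠ S`, then `w` is a Coxeter element. -/
theorem stmt_10 {m : ℕ}
    (cs : CoxeterSystem (CoxeterMatrix.Aₙ m) (Equiv.Perm (Fin (m + 1))))
    (hs : ∀ i : Fin m, cs.simple i = Equiv.swap i.castSucc i.succ)
    (w : Equiv.Perm (Fin (m + 1)))
    (hfull : cs.supp w = Set.univ)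
    (hL : ∀ i : Fin m, cs.IsLeftDescent w i → cs.supp (cs.simple i * w) ≠ Set.univ)
    (hR : ∀ i : Fin m, cs.IsRightDescent w i → cs.supp (w * cs.simple i) ≠ Set.univ) :
    ∃ ω : List (Fin m), ω.Nodup ∧ (∀ i : Fin m, i ∈ ω) ∧ w = cs.wordProd ω := by
  classical
  open Stmt10 in
  have hFw : ∀ j : ℕ, 0 ≤ j → j < m → ¬ Stmt10.Pres w j := by
    intro j _ hj hp
    have hmem : (⟨j, hj⟩ : Fin m) ∈ cs.supp w := hfull ▸ Set.mem_univ _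
    obtain ⟨ω, hred, hπ, hjω⟩ := hmem
    exact Stmt10.avoid_of_reduced_of_pres cs hs hj ω hred (by rw [hπ]; exact hp) _ hjω rfl
  have hHLw : ∀ i, i < m → Stmt10.pnat w.symm (i + 1) < Stmt10.pnat w.symm i →
      ∀ x, (Stmt10.pnat w.symm x ≤ i ↔ (x < i ∨ x = i + 1)) := by
    intro i hi hdesc
    have hld : cs.IsLeftDescent w ⟨i, hi⟩ := (Stmt10.isLeftDescent_iff cs hs w hi).mpr hdesc
    have hsupp := hL ⟨i, hi⟩ hld
    have hexj : ∃ j : Fin m, j ∉ cs.supp (cs.simple ⟨i, hi⟩ * w) := by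
      by_contra hc
      push_neg at hc
      apply hsupp
      ext j
      simp [hc j]
    obtain ⟨j, hj⟩ := hexj
    obtain ⟨ω₀, hred₀, hπ₀⟩ := cs.exists_reduced_word' (cs.simple ⟨i, hi⟩ * w)
    have havoid : ∀ i' ∈ ω₀, (i' : ℕ) ≠ (j : ℕ) := by
      intro i' hi' hcc
      apply hj
      have : i' = j := Fin.ext hcc
      exact ⟨ω₀, hred₀, hπ₀.symm, this ▸ hi'⟩
    have hpres : Stmt10.Pres (Stmt10.sw ⟨i, hi⟩ * w) (j : ℕ) := by
      rw [← Stmt10.simple_eq cs hs, hπ₀]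
      exact Stmt10.pres_of_avoid cs hs ω₀ havoid
    have hji : (j : ℕ) = i := by
      by_contra hne
      apply hFw (j : ℕ) (by omega) j.isLt
      have h1 : Stmt10.Pres (Stmt10.sw ⟨i, hi⟩) (j : ℕ) :=
        Stmt10.Pres.sw (by simpa using fun hcc => hne hcc.symm)
      have h2 : w = Stmt10.sw ⟨i, hi⟩ * (Stmt10.sw ⟨i, hi⟩ * w) := by
        rw [← mul_assoc, Stmt10.sw_mul_self, one_mul]
      exact h2 ▸ Stmt10.Pres.mul h1 hpres
    intro x
    have hx := hpres (Stmt10.pnat w.symm x)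
    rw [hji, Stmt10.pnat_mul, Stmt10.pnat_pnat_symm, Stmt10.pnat_sw] at hx
    have hval : ((⟨i, hi⟩ : Fin m) : ℕ) = i := rfl
    rw [hval] at hx
    split_ifs at hx <;> omega
  have hHRw : ∀ i, i < m → Stmt10.pnat w (i + 1) < Stmt10.pnat w i →
      ∀ x, (Stmt10.pnat w x ≤ i ↔ (x < i ∨ x = i + 1)) := by
    intro i hi hdesc
    have hrd : cs.IsRightDescent w ⟨i, hi⟩ := (Stmt10.isRightDescent_iff cs hs w hi).mpr hdesc
    have hsupp := hR ⟨i, hi⟩ hrd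
    have hexj : ∃ j : Fin m, j ∉ cs.supp (w * cs.simple ⟨i, hi⟩) := by
      by_contra hc
      push_neg at hc
      apply hsupp
      ext j
      simp [hc j]
    obtain ⟨j, hj⟩ := hexj
    obtain ⟨ω₀, hred₀, hπ₀⟩ := cs.exists_reduced_word' (w * cs.simple ⟨i, hi⟩)
    have havoid : ∀ i' ∈ ω₀, (i' : ℕ) ≠ (j : ℕ) := by
      intro i' hi' hcc
      apply hj
      have : i' = j := Fin.ext hcc
      exact ⟨ω₀, hred₀, hπ₀.symm, this ▸ hi'⟩
    have hpres : Stmt10.Pres (w * Stmt10.sw ⟨i, hi⟩) (j : ℕ) := by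
      rw [← Stmt10.simple_eq cs hs, hπ₀]
      exact Stmt10.pres_of_avoid cs hs ω₀ havoid
    have hji : (j : ℕ) = i := by
      by_contra hne
      apply hFw (j : ℕ) (by omega) j.isLt
      have h1 : Stmt10.Pres (Stmt10.sw ⟨i, hi⟩) (j : ℕ) :=
        Stmt10.Pres.sw (by simpa using fun hcc => hne hcc.symm)
      have h2 : w = (w * Stmt10.sw ⟨i, hi⟩) * Stmt10.sw ⟨i, hi⟩ := by
        rw [mul_assoc, Stmt10.sw_mul_self, mul_one]
      exact h2 ▸ Stmt10.Pres.mul hpres h1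
    have hss : ∀ x, Stmt10.pnat (Stmt10.sw ⟨i, hi⟩) (Stmt10.pnat (Stmt10.sw ⟨i, hi⟩) x) = x := by
      intro x
      rw [← Stmt10.pnat_mul, Stmt10.sw_mul_self, Stmt10.pnat_one]
    intro x
    have hx := hpres (Stmt10.pnat (Stmt10.sw ⟨i, hi⟩) x)
    rw [hji, Stmt10.pnat_mul, hss] at hx
    rw [Stmt10.pnat_sw] at hx
    have hval : ((⟨i, hi⟩ : Fin m) : ℕ) = i := rfl
    rw [hval] at hx
    split_ifs at hx <;> omega
  obtain ⟨ω, hnd, hcov, _, hprod⟩ :=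
    Stmt10.aux cs hs m 0 w (by omega)
      (fun x hx => absurd hx (Nat.not_lt_zero x))
      (fun j _ hj => hFw j (Nat.zero_le j) hj)
      hHLw hHRw
  exact ⟨ω, hnd, fun i => hcov i (Nat.zero_le _), hprod⟩
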